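/- The function f(x) = x² − x³ on the interval I = [0, 1/3] is convex on I, but there is no convex function F of class C³ on any open interval J containing I with F = f on I. -/

import Mathlib

open Set Filter Topology

private lemma hasDerivAt_cube (x : ℝ) :
    HasDerivAt (fun x : ℝ => x^2 - x^3) (2*x - 3*x^2) x := by
  have h := (hasDerivAt_pow 2 x).sub (hasDerivAt_pow 3 x)
  refine h.congr_deriv ?_
  push_cast
  ring

private lemma hasDerivAt_cube' (x : ℝ) :
    HasDerivAt (fun x : ℝ => 2*x - 3*x^2) (2 - 6*x) x := by
  have h := ((hasDerivAt_id x).const_mul (2:ℝ)).sub ((hasDerivAt_pow 2 x).const_mul (3:ℝ))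
  refine h.congr_deriv ?_
  push_cast
  ring

private lemma hasDerivAt_cube'' (x : ℝ) :
    HasDerivAt (fun x : ℝ => 2 - 6*x) (-6) x := by
  have h := (hasDerivAt_const x (2:ℝ)).sub ((hasDerivAt_id x).const_mul (6:ℝ))
  refine h.congr_deriv ?_
  ring

/-- The function `f(x) = x² - x³` is convex on `I = [0, 1/3]`, but there is no convex function
`F` of class `C³` on any open interval `J ⊇ I` with `F = f` on `I`. -/
theorem stmt_1 :
    ConvexOn ℝ (Set.Icc (0:ℝ) (1/3)) (fun x => x^2 - x^3) ∧
    ∀ a b : ℝ, Set.Icc (0:ℝ) (1/3) ⊆ Set.Ioo a b →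
      ¬ ∃ F : ℝ → ℝ, ContDiffOn ℝ 3 F (Set.Ioo a b) ∧ ConvexOn ℝ (Set.Ioo a b) F ∧
        Set.EqOn F (fun x => x^2 - x^3) (Set.Icc (0:ℝ) (1/3)) := by
  constructor
  · refine convexOn_of_hasDerivWithinAt2_nonneg (convex_Icc _ _)
      (f' := fun x => 2*x - 3*x^2) (f'' := fun x => 2 - 6*x)
      (Continuous.continuousOn (by continuity)) ?_ ?_ ?_
    · intro x _; exact (hasDerivAt_cube x).hasDerivWithinAt
    · intro x _; exact (hasDerivAt_cube' x).hasDerivWithinAt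
    · intro x hx
      rw [interior_Icc] at hx
      have := hx.2
      show (0:ℝ) ≤ 2 - 6*x
      linarith
  · rintro a b hsub ⟨F, hF3, hFc, hFeq⟩
    have hJo : IsOpen (Ioo a b) := isOpen_Ioo
    have h13I : (1/3 : ℝ) ∈ Icc (0:ℝ) (1/3) := by norm_num
    have h13J : (1/3:ℝ) ∈ Ioo a b := hsub h13I
    have hF1 : ContDiffOn ℝ 2 (deriv F) (Ioo a b) :=
      hF3.deriv_of_isOpen hJo (by norm_num)
    have hF2 : ContDiffOn ℝ 1 (deriv (deriv F)) (Ioo a b) :=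
      hF1.deriv_of_isOpen hJo (by norm_num)
    set g := deriv (deriv F) with hg_def
    have hdF : ∀ x ∈ Ioo a b, DifferentiableAt ℝ F x := fun x hx =>
      (hF3.contDiffAt (hJo.mem_nhds hx)).differentiableAt (by norm_num)
    have hdF1 : ∀ x ∈ Ioo a b, DifferentiableAt ℝ (deriv F) x := fun x hx =>
      (hF1.contDiffAt (hJo.mem_nhds hx)).differentiableAt (by norm_num)
    have hdF2 : ∀ x ∈ Ioo a b, DifferentiableAt ℝ g x := fun x hx =>
      (hF2.contDiffAt (hJo.mem_nhds hx)).differentiableAt (by norm_num)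
    -- deriv F = 2x - 3x² on (0, 1/3)
    have hd1 : ∀ x ∈ Ioo (0:ℝ) (1/3), deriv F x = 2*x - 3*x^2 := by
      intro x hx
      have hFe : F =ᶠ[𝓝 x] (fun y => y^2 - y^3) :=
        eventually_of_mem (isOpen_Ioo.mem_nhds hx) fun y hy => hFeq (Ioo_subset_Icc_self hy)
      rw [hFe.deriv_eq]
      exact (hasDerivAt_cube x).deriv
    -- g = 2 - 6x on (0, 1/3)
    have key : ∀ x ∈ Ioo (0:ℝ) (1/3), g x = 2 - 6*x := by
      intro x hx
      have hFe : deriv F =ᶠ[𝓝 x] (fun y => 2*y - 3*y^2) :=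
        eventually_of_mem (isOpen_Ioo.mem_nhds hx) fun y hy => hd1 y hy
      rw [hg_def, hFe.deriv_eq]
      exact (hasDerivAt_cube' x).deriv
    -- g(1/3) = 0 by continuity
    have hclos : (1/3 : ℝ) ∈ closure (Ioo (0:ℝ) (1/3)) := by
      rw [closure_Ioo (by norm_num : (0:ℝ) ≠ 1/3)]
      exact h13I
    haveI hne : (𝓝[Ioo (0:ℝ) (1/3)] (1/3:ℝ)).NeBot :=
      mem_closure_iff_nhdsWithin_neBot.1 hclos
    have hgcont : ContinuousAt g (1/3:ℝ) :=
      (hF2.contDiffAt (hJo.mem_nhds h13J)).continuousAt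
    have hg13 : g (1/3) = 0 := by
      have t1 : Tendsto g (𝓝[Ioo (0:ℝ) (1/3)] (1/3:ℝ)) (𝓝 (g (1/3))) :=
        hgcont.continuousWithinAt
      have t2 : Tendsto g (𝓝[Ioo (0:ℝ) (1/3)] (1/3:ℝ)) (𝓝 0) := by
        have hc : ContinuousAt (fun y : ℝ => 2 - 6*y) (1/3:ℝ) :=
          (continuous_const.sub (continuous_const.mul continuous_id)).continuousAt
        have t3 : Tendsto (fun y : ℝ => 2 - 6*y) (𝓝[Ioo (0:ℝ) (1/3)] (1/3:ℝ))
            (𝓝 (2 - 6*(1/3:ℝ))) := hc.tendsto.mono_left nhdsWithin_le_nhds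
        rw [show (2 - 6*(1/3:ℝ)) = 0 by norm_num] at t3
        refine t3.congr' ?_
        filter_upwards [self_mem_nhdsWithin] with y hy
        exact (key y hy).symm
      exact tendsto_nhds_unique t1 t2
    -- g ≥ 0 on J by convexity
    have hmono : MonotoneOn (deriv F) (Ioo a b) := hFc.monotoneOn_deriv hdF
    have hg_nonneg : ∀ x ∈ Ioo a b, 0 ≤ g x := by
      intro x hx
      have hd : HasDerivAt (deriv F) (g x) x := (hdF1 x hx).hasDerivAt
      rw [hasDerivAt_iff_tendsto_slope] at hd
      have t : Tendsto (slope (deriv F) x) (𝓝[>] x) (𝓝 (g x)) :=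
        hd.mono_left (nhdsWithin_mono x fun y hy => mem_compl_singleton_iff.2 (ne_of_gt hy))
      refine ge_of_tendsto t ?_
      have hmem : Ioo x b ∈ 𝓝[>] x := Ioo_mem_nhdsGT_of_mem ⟨le_rfl, hx.2⟩
      filter_upwards [hmem] with y hy
      have hyJ : y ∈ Ioo a b := ⟨hx.1.trans hy.1, hy.2⟩
      rw [slope_def_field]
      exact div_nonneg (sub_nonneg.2 (hmono hx hyJ hy.1.le)) (sub_nonneg.2 hy.1.le)
    -- local min at 1/3 ⇒ deriv g (1/3) = 0
    have hmin : IsLocalMin g (1/3:ℝ) := by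
      filter_upwards [hJo.mem_nhds h13J] with y hy
      rw [hg13]
      exact hg_nonneg y hy
    have hderiv0 : deriv g (1/3:ℝ) = 0 := hmin.deriv_eq_zero
    -- but from the left, deriv g (1/3) = -6
    have heq : ∀ y ∈ Ioc (0:ℝ) (1/3), g y = 2 - 6*y := by
      rintro y ⟨hy0, hy3⟩
      rcases eq_or_lt_of_le hy3 with rfl | h
      · rw [hg13]; norm_num
      · exact key y ⟨hy0, h⟩
    have hmem : Ioc (0:ℝ) (1/3) ∈ 𝓝[Iic (1/3:ℝ)] (1/3:ℝ) := by
      rw [mem_nhdsWithin]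
      exact ⟨Ioi 0, isOpen_Ioi, by norm_num, fun y hy => ⟨hy.1, hy.2⟩⟩
    have hdg : DifferentiableAt ℝ g (1/3:ℝ) := hdF2 _ h13J
    have H1 : HasDerivWithinAt g (deriv g (1/3:ℝ)) (Iic (1/3:ℝ)) (1/3:ℝ) :=
      hdg.hasDerivAt.hasDerivWithinAt
    have H2 : HasDerivWithinAt (fun y : ℝ => 2 - 6*y) (deriv g (1/3:ℝ)) (Iic (1/3:ℝ)) (1/3:ℝ) := by
      refine H1.congr_of_eventuallyEq ?_ ?_
      · filter_upwards [hmem] with y hy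
        exact (heq y hy).symm
      · rw [hg13]; norm_num
    have H3 : HasDerivWithinAt (fun y : ℝ => 2 - 6*y) (-6) (Iic (1/3:ℝ)) (1/3:ℝ) :=
      (hasDerivAt_cube'' _).hasDerivWithinAt
    have hu : UniqueDiffWithinAt ℝ (Iic (1/3:ℝ)) (1/3:ℝ) :=
      uniqueDiffOn_Iic (1/3:ℝ) _ (mem_Iic.2 le_rfl)
    have : deriv g (1/3:ℝ) = -6 := by
      rw [← H2.derivWithin hu, H3.derivWithin hu]
    rw [hderiv0] at this
    norm_num at this
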